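/- Let J be a 3×3 real matrix all of whose complex eigenvalues have negative real part, let d₁, d₂, d₃ > 0 be reals, and for y ≥ 0 set J(y) = J − y·diag(d₁, d₂, d₃). Then the system admits a Turing–Hopf instability if and only if there exists y'' > 0 such that trace(adjugate J(y'')) > 0 and trace(J(y''))·trace(adjugate J(y'')) − det J(y'') > 0. -/

import Mathlib

open Matrix Polynomial

/-- The multiset of complex eigenvalues of a real 3×3 matrix, i.e. the roots of its
characteristic polynomial regarded as a polynomial over `ℂ`. -/
noncomputable def eigs (M : Matrix (Fin 3) (Fin 3) ℝ) : Multiset ℂ :=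
  (M.charpoly.map (algebraMap ℝ ℂ)).roots

/-- `Jmat J d₁ d₂ d₃ y = J - y • diag(d₁, d₂, d₃)`. -/
noncomputable def Jmat (J : Matrix (Fin 3) (Fin 3) ℝ) (d₁ d₂ d₃ y : ℝ) :
    Matrix (Fin 3) (Fin 3) ℝ :=
  J - y • Matrix.diagonal ![d₁, d₂, d₃]

open ComplexConjugate

section Aux

lemma TH_ms_swap12 {α : Type*} (a b c : α) : ({a,b,c} : Multiset α) = {b,a,c} := by
  change a ::ₘ b ::ₘ {c} = b ::ₘ a ::ₘ {c}; exact Multiset.cons_swap a b {c}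

lemma TH_ms_rot {α : Type*} (a b c : α) : ({a,b,c} : Multiset α) = {c,a,b} := by
  change a ::ₘ b ::ₘ c ::ₘ 0 = c ::ₘ a ::ₘ b ::ₘ 0
  rw [Multiset.cons_swap b c, Multiset.cons_swap a c]

lemma TH_charpoly_cubic (M : Matrix (Fin 3) (Fin 3) ℝ) :
    M.charpoly = (Cubic.mk 1 (-M.trace) M.adjugate.trace (-M.det)).toPoly := by
  rw [Matrix.charpoly, Matrix.det_fin_three, Cubic.toPoly, Matrix.trace_fin_three,
    Matrix.det_fin_three]
  have ha : ∀ i j : Fin 3, Matrix.charmatrix M i j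
      = if i = j then X - C (M i j) else - C (M i j) := by
    intro i j
    by_cases h : i = j
    · subst h; simp [Matrix.charmatrix_apply_eq]
    · simp [Matrix.charmatrix_apply_ne _ _ _ h, h]
  have tr3 : M.adjugate.trace = (M 1 1 * M 2 2 - M 1 2 * M 2 1)
      + (M 0 0 * M 2 2 - M 0 2 * M 2 0) + (M 0 0 * M 1 1 - M 0 1 * M 1 0) := by
    rw [Matrix.adjugate_fin_three, Matrix.trace_fin_three]
    simp
  rw [tr3, ha, ha, ha, ha, ha, ha, ha, ha, ha]
  norm_num [Fin.ext_iff]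
  ring

lemma TH_eigs_eq_cubic_roots (M : Matrix (Fin 3) (Fin 3) ℝ) :
    eigs M
      = (Cubic.map (algebraMap ℝ ℂ) (Cubic.mk 1 (-M.trace) M.adjugate.trace (-M.det))).roots := by
  rw [eigs, TH_charpoly_cubic, Cubic.map_roots]

lemma TH_eigs_three (M : Matrix (Fin 3) (Fin 3) ℝ) :
    ∃ x y z : ℂ, eigs M = {x, y, z} := by
  rw [TH_eigs_eq_cubic_roots]
  have ha : (Cubic.mk 1 (-M.trace) M.adjugate.trace (-M.det)).a ≠ 0 := one_ne_zero
  exact (Cubic.splits_iff_roots_eq_three ha).mp (IsAlgClosed.splits _)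

lemma TH_eigs_vieta (M : Matrix (Fin 3) (Fin 3) ℝ) {x y z : ℂ} (h3 : eigs M = {x, y, z}) :
    (M.trace : ℂ) = x + y + z ∧ (M.adjugate.trace : ℂ) = x*y + x*z + y*z ∧
      (M.det : ℂ) = x*y*z := by
  have ha : (Cubic.mk 1 (-M.trace) M.adjugate.trace (-M.det)).a ≠ 0 := one_ne_zero
  rw [TH_eigs_eq_cubic_roots] at h3
  have hb := Cubic.b_eq_three_roots ha h3
  have hc := Cubic.c_eq_three_roots ha h3
  have hd := Cubic.d_eq_three_roots ha h3
  simp only [Cubic.mk, _root_.map_one, map_neg, one_mul, Complex.coe_algebraMap] at hb hc hd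
  refine ⟨by linear_combination -hb, by linear_combination hc, by linear_combination -hd⟩

lemma TH_eigs_conj_mem (M : Matrix (Fin 3) (Fin 3) ℝ) {w : ℂ} (hw : w ∈ eigs M) :
    conj w ∈ eigs M := by
  have hne : M.charpoly.map (algebraMap ℝ ℂ) ≠ 0 := by
    refine Polynomial.map_ne_zero_iff (algebraMap ℝ ℂ).injective |>.mpr ?_
    exact M.charpoly_monic.ne_zero
  rw [eigs, Polynomial.mem_roots hne] at hw ⊢
  have h := hw
  rw [Polynomial.IsRoot, Polynomial.eval_map, ← Polynomial.aeval_def] at h ⊢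
  rw [Polynomial.aeval_conj, h, map_zero]

/-- conclusion in the complex-pair case -/
def TH_PairCase (M : Matrix (Fin 3) (Fin 3) ℝ) : Prop :=
  ∃ α β r : ℝ, β ≠ 0 ∧ eigs M = {α + β * Complex.I, α - β * Complex.I, (r : ℂ)} ∧
    M.trace = 2*α + r ∧ M.adjugate.trace = α^2 + β^2 + 2*α*r ∧ M.det = (α^2 + β^2) * r

/-- conclusion in the all-real case -/
def TH_RealCase (M : Matrix (Fin 3) (Fin 3) ℝ) : Prop :=
  ∃ x y z : ℝ, eigs M = {(x:ℂ), (y:ℂ), (z:ℂ)} ∧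
    M.trace = x + y + z ∧ M.adjugate.trace = x*y + x*z + y*z ∧ M.det = x*y*z

lemma TH_aux2 (M : Matrix (Fin 3) (Fin 3) ℝ) (x y z : ℂ) (h3 : eigs M = {x, y, z})
    (hx : x.im ≠ 0) (hxy : conj x = y) : TH_PairCase M := by
  obtain ⟨h1, h2, h3'⟩ := TH_eigs_vieta M h3
  have hzim : z.im = 0 := by
    have := congrArg Complex.im h1
    simp [← hxy] at this
    linarith [this]
  refine ⟨x.re, x.im, z.re, hx, ?_, ?_, ?_, ?_⟩
  · rw [h3]
    congr 1
    · exact (Complex.re_add_im x).symm ▸ rfl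
    · congr 1
      · rw [← hxy]
        apply Complex.ext <;> simp
      · congr 1
        apply Complex.ext <;> simp [hzim]
  · have := congrArg Complex.re h1
    simp [← hxy] at this
    linarith [this]
  · have hxx : x = x.re + x.im * Complex.I := (Complex.re_add_im x).symm
    have hy2 : y = (x.re : ℂ) - x.im * Complex.I := by
      rw [← hxy]; apply Complex.ext <;> simp
    have hz : z = (z.re : ℂ) := by apply Complex.ext <;> simp [hzim]
    rw [hxx, hy2, hz] at h2
    have : (M.adjugate.trace : ℂ) = ((x.re^2 + x.im^2 + 2*x.re*z.re : ℝ) : ℂ) := by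
      rw [h2]; push_cast
      linear_combination (-(x.im^2) : ℂ) * Complex.I_sq
    exact_mod_cast this
  · have hxx : x = x.re + x.im * Complex.I := (Complex.re_add_im x).symm
    have hy2 : y = (x.re : ℂ) - x.im * Complex.I := by
      rw [← hxy]; apply Complex.ext <;> simp
    have hz : z = (z.re : ℂ) := by apply Complex.ext <;> simp [hzim]
    rw [hxx, hy2, hz] at h3'
    have : (M.det : ℂ) = (((x.re^2 + x.im^2) * z.re : ℝ) : ℂ) := by
      rw [h3']; push_cast
      linear_combination ((-(x.im^2) * z.re) : ℂ) * Complex.I_sq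
    exact_mod_cast this

lemma TH_aux1 (M : Matrix (Fin 3) (Fin 3) ℝ) (x y z : ℂ) (h3 : eigs M = {x, y, z})
    (hx : x.im ≠ 0) : TH_PairCase M := by
  have hxmem : x ∈ eigs M := by rw [h3]; simp
  have hconj : conj x ∈ eigs M := TH_eigs_conj_mem M hxmem
  rw [h3] at hconj
  have hne : conj x ≠ x := by
    rw [Ne, Complex.conj_eq_iff_im]; exact hx
  rcases Multiset.mem_cons.mp hconj with h | h
  · exact absurd h hne
  rcases Multiset.mem_cons.mp h with h | h
  · exact TH_aux2 M x y z h3 hx h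
  · have h' : conj x = z := Multiset.mem_singleton.mp h
    have h3'' : eigs M = {x, z, y} := by
      rw [h3]; congr 1; exact Multiset.pair_comm y z
    exact TH_aux2 M x z y h3'' hx h'

lemma TH_eigs_trichotomy (M : Matrix (Fin 3) (Fin 3) ℝ) : TH_RealCase M ∨ TH_PairCase M := by
  obtain ⟨x, y, z, h3⟩ := TH_eigs_three M
  by_cases hx : x.im = 0
  · by_cases hy : y.im = 0
    · by_cases hz : z.im = 0
      · left
        have hx' : x = (x.re : ℂ) := by apply Complex.ext <;> simp [hx]
        have hy' : y = (y.re : ℂ) := by apply Complex.ext <;> simp [hy]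
        have hz' : z = (z.re : ℂ) := by apply Complex.ext <;> simp [hz]
        obtain ⟨h1, h2, h3'⟩ := TH_eigs_vieta M h3
        rw [hx', hy', hz'] at h1 h2 h3' h3
        exact ⟨x.re, y.re, z.re, h3, by exact_mod_cast h1, by exact_mod_cast h2,
          by exact_mod_cast h3'⟩
      · right
        have h3'' : eigs M = {z, x, y} := by rw [h3, TH_ms_rot]
        exact TH_aux1 M z x y h3'' hz
    · right
      have h3'' : eigs M = {y, x, z} := by rw [h3, TH_ms_swap12]
      exact TH_aux1 M y x z h3'' hy
  · exact Or.inr (TH_aux1 M x y z h3 hx)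

lemma TH_cubic_no_sign_pattern (a₀ a₁ a₂ a₃ x₀ x₁ x₂ x₃ x₄ : ℝ)
    (h01 : x₀ < x₁) (h12 : x₁ < x₂) (h23 : x₂ < x₃) (h34 : x₃ < x₄)
    (P : ℝ → ℝ) (hP : ∀ t, P t = a₀ + a₁*t + a₂*t^2 + a₃*t^3)
    (s0 : P x₀ < 0) (s1 : 0 ≤ P x₁) (s2 : P x₂ < 0) (s3 : 0 ≤ P x₃) (s4 : P x₄ < 0) :
    False := by
  have p01 : (0:ℝ) < x₁ - x₀ := by linarith
  have p02 : (0:ℝ) < x₂ - x₀ := by linarith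
  have p03 : (0:ℝ) < x₃ - x₀ := by linarith
  have p04 : (0:ℝ) < x₄ - x₀ := by linarith
  have p12 : (0:ℝ) < x₂ - x₁ := by linarith
  have p13 : (0:ℝ) < x₃ - x₁ := by linarith
  have p14 : (0:ℝ) < x₄ - x₁ := by linarith
  have p23 : (0:ℝ) < x₃ - x₂ := by linarith
  have p24 : (0:ℝ) < x₄ - x₂ := by linarith
  have p34 : (0:ℝ) < x₄ - x₃ := by linarith
  set V₀ := (x₂-x₁)*(x₃-x₁)*(x₄-x₁)*(x₃-x₂)*(x₄-x₂)*(x₄-x₃) with hV0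
  set V₁ := (x₂-x₀)*(x₃-x₀)*(x₄-x₀)*(x₃-x₂)*(x₄-x₂)*(x₄-x₃) with hV1
  set V₂ := (x₁-x₀)*(x₃-x₀)*(x₄-x₀)*(x₃-x₁)*(x₄-x₁)*(x₄-x₃) with hV2
  set V₃ := (x₁-x₀)*(x₂-x₀)*(x₄-x₀)*(x₂-x₁)*(x₄-x₁)*(x₄-x₂) with hV3
  set V₄ := (x₁-x₀)*(x₂-x₀)*(x₃-x₀)*(x₂-x₁)*(x₃-x₁)*(x₃-x₂) with hV4
  have key : P x₀ * V₀ - P x₁ * V₁ + P x₂ * V₂ - P x₃ * V₃ + P x₄ * V₄ = 0 := by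
    rw [hP, hP, hP, hP, hP, hV0, hV1, hV2, hV3, hV4]; ring
  have hV0p : 0 < V₀ := mul_pos (mul_pos (mul_pos (mul_pos (mul_pos p12 p13) p14) p23) p24) p34
  have hV1p : 0 < V₁ := mul_pos (mul_pos (mul_pos (mul_pos (mul_pos p02 p03) p04) p23) p24) p34
  have hV2p : 0 < V₂ := mul_pos (mul_pos (mul_pos (mul_pos (mul_pos p01 p03) p04) p13) p14) p34
  have hV3p : 0 < V₃ := mul_pos (mul_pos (mul_pos (mul_pos (mul_pos p01 p02) p04) p12) p14) p24
  have hV4p : 0 < V₄ := mul_pos (mul_pos (mul_pos (mul_pos (mul_pos p01 p02) p03) p12) p13) p23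
  have t0 : P x₀ * V₀ < 0 := mul_neg_of_neg_of_pos s0 hV0p
  have t1 : 0 ≤ P x₁ * V₁ := mul_nonneg s1 hV1p.le
  have t2 : P x₂ * V₂ < 0 := mul_neg_of_neg_of_pos s2 hV2p
  have t3 : 0 ≤ P x₃ * V₃ := mul_nonneg s3 hV3p.le
  have t4 : P x₄ * V₄ < 0 := mul_neg_of_neg_of_pos s4 hV4p
  linarith

lemma TH_cubic_eventually_neg (a₀ a₁ a₂ a₃ : ℝ) (h : a₃ < 0) (T₀ : ℝ) :
    ∃ T, T₀ < T ∧ a₀ + a₁*T + a₂*T^2 + a₃*T^3 < 0 := by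
  set B := (|a₀| + |a₁| + |a₂| + 1) / (-a₃) with hB
  refine ⟨max (max 1 (T₀+1)) B, ?_, ?_⟩
  · calc T₀ < T₀ + 1 := by linarith
      _ ≤ max 1 (T₀+1) := le_max_right _ _
      _ ≤ _ := le_max_left _ _
  · set T := max (max 1 (T₀+1)) B with hT
    have hT1 : (1:ℝ) ≤ T := le_trans (le_max_left _ _) (le_max_left _ _)
    have hTB : B ≤ T := le_max_right _ _
    have hna : 0 < -a₃ := by linarith
    have h1 : |a₀| + |a₁| + |a₂| + 1 ≤ (-a₃) * T := by
      rw [hB] at hTB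
      have := mul_le_mul_of_nonneg_right hTB hna.le
      rw [div_mul_cancel₀ _ hna.ne'] at this
      linarith
    have hT0 : (0:ℝ) < T := by linarith
    have hT2 : (1:ℝ) ≤ T^2 := by nlinarith
    have e0 : a₀ ≤ |a₀| * T^2 := by
      nlinarith [le_abs_self a₀, mul_nonneg (abs_nonneg a₀) (show (0:ℝ) ≤ T^2 - 1 by linarith)]
    have e1 : a₁ * T ≤ |a₁| * T^2 := by
      nlinarith [mul_le_mul_of_nonneg_right (le_abs_self a₁) hT0.le,
        mul_nonneg (abs_nonneg a₁) (show (0:ℝ) ≤ T^2 - T by nlinarith)]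
    have e2 : a₂ * T^2 ≤ |a₂| * T^2 := by
      nlinarith [mul_le_mul_of_nonneg_right (le_abs_self a₂) (sq_nonneg T)]
    have e3 : a₃ * T^3 ≤ -((|a₀| + |a₁| + |a₂| + 1) * T^2) := by
      have := mul_le_mul_of_nonneg_right
        (show a₃ * T ≤ -(|a₀| + |a₁| + |a₂| + 1) by linarith) (sq_nonneg T)
      nlinarith [this]
    nlinarith [e0, e1, e2, e3, hT2]

lemma TH_quad_pos_tail (b₀ b₁ b₂ : ℝ) (h : 0 < b₂) :
    ∃ B : ℝ, ∀ t, B ≤ t → 0 < b₀ + b₁*t + b₂*t^2 := by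
  refine ⟨max 1 ((|b₀| + |b₁| + 1) / b₂), fun t ht => ?_⟩
  have ht1 : (1:ℝ) ≤ t := le_trans (le_max_left _ _) ht
  have htB : (|b₀| + |b₁| + 1) / b₂ ≤ t := le_trans (le_max_right _ _) ht
  have h1 : |b₀| + |b₁| + 1 ≤ b₂ * t := by
    have := mul_le_mul_of_nonneg_right htB h.le
    rw [div_mul_cancel₀ _ h.ne'] at this
    linarith
  have ht0 : (0:ℝ) < t := by linarith
  have e0 : -b₀ ≤ |b₀| * t := by
    nlinarith [neg_abs_le b₀, mul_nonneg (abs_nonneg b₀) (show (0:ℝ) ≤ t - 1 by linarith)]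
  have e1 : -(b₁ * t) ≤ |b₁| * t := by
    nlinarith [mul_le_mul_of_nonneg_right (neg_abs_le b₁) ht0.le]
  have e2 : (|b₀| + |b₁| + 1) * t ≤ b₂ * t^2 := by
    nlinarith [mul_le_mul_of_nonneg_right h1 ht0.le]
  nlinarith [e0, e1, e2, ht0]

lemma TH_helper_sum (x y z : ℝ) (h1 : 0 < x + y) (hsum : x + y + z < 0)
    (hprod : 0 < (x+y)*(y+z)*(z+x)) : x*y + x*z + y*z < 0 := by
  have h2 : y + z < 0 := by
    by_contra h
    push_neg at h
    have h3 : z + x < 0 := by linarith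
    have : (x+y)*(y+z)*(z+x) ≤ 0 :=
      mul_nonpos_of_nonneg_of_nonpos (mul_nonneg h1.le h) h3.le
    linarith
  have h3 : z + x < 0 := by
    by_contra h
    push_neg at h
    have : (x+y)*(y+z)*(z+x) ≤ 0 := by
      have hxy2 : (x+y)*(y+z) < 0 := mul_neg_of_pos_of_neg h1 h2
      exact mul_nonpos_of_nonpos_of_nonneg hxy2.le h
    linarith
  nlinarith [mul_pos h1 (show 0 < -(z+x) by linarith), sq_nonneg x]

lemma TH_all_real_contra (x y z : ℝ) (he1 : x + y + z < 0)
    (he2 : 0 < x*y + x*z + y*z)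
    (hf : 0 < (x+y+z)*(x*y+x*z+y*z) - x*y*z) : False := by
  have hprod : 0 < (x+y)*(y+z)*(z+x) := by nlinarith [hf]
  have hone : 0 < x + y ∨ 0 < y + z ∨ 0 < z + x := by
    by_contra h
    push_neg at h
    obtain ⟨ha, hb, hc⟩ := h
    have : (x+y)*(y+z)*(z+x) ≤ 0 :=
      mul_nonpos_of_nonneg_of_nonpos (mul_nonneg_of_nonpos_of_nonpos ha hb) hc
    linarith
  rcases hone with h | h | h
  · have := TH_helper_sum x y z h he1 hprod
    linarith
  · have := TH_helper_sum y z x h (by linarith) (by nlinarith [hprod])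
    nlinarith [this]
  · have := TH_helper_sum z x y h (by linarith) (by nlinarith [hprod])
    nlinarith [this]

lemma TH_Jmat_apply (J : Matrix (Fin 3) (Fin 3) ℝ) (d₁ d₂ d₃ y : ℝ) (i j : Fin 3) :
    Jmat J d₁ d₂ d₃ y i j = J i j - y * (if i = j then ![d₁,d₂,d₃] i else 0) := by
  by_cases h : i = j
  · subst h; simp [Jmat, Matrix.diagonal_apply_eq]
  · simp [Jmat, Matrix.diagonal_apply_ne _ h, h]

lemma TH_Jmat_zero (J : Matrix (Fin 3) (Fin 3) ℝ) (d₁ d₂ d₃ : ℝ) :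
    Jmat J d₁ d₂ d₃ 0 = J := by
  simp [Jmat]

lemma TH_E1_poly (J : Matrix (Fin 3) (Fin 3) ℝ) (d₁ d₂ d₃ y : ℝ) :
    (Jmat J d₁ d₂ d₃ y).trace = J.trace - (d₁+d₂+d₃)*y := by
  rw [Matrix.trace_fin_three, Matrix.trace_fin_three, TH_Jmat_apply, TH_Jmat_apply,
    TH_Jmat_apply]
  norm_num [Fin.ext_iff, Matrix.cons_val_two]; ring

lemma TH_E2_poly (J : Matrix (Fin 3) (Fin 3) ℝ) (d₁ d₂ d₃ : ℝ) :
    ∃ b₀ b₁ : ℝ, ∀ y, (Jmat J d₁ d₂ d₃ y).adjugate.trace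
      = b₀ + b₁*y + (d₁*d₂+d₁*d₃+d₂*d₃)*y^2 := by
  refine ⟨J 1 1 * J 2 2 - J 1 2 * J 2 1 + (J 0 0 * J 2 2 - J 0 2 * J 2 0)
    + (J 0 0 * J 1 1 - J 0 1 * J 1 0),
    -(J 1 1 * d₃ + J 2 2 * d₂ + J 0 0 * d₃ + J 2 2 * d₁ + J 0 0 * d₂ + J 1 1 * d₁),
    fun y => ?_⟩
  have tr3 : ∀ M : Matrix (Fin 3) (Fin 3) ℝ, M.adjugate.trace =
      (M 1 1 * M 2 2 - M 1 2 * M 2 1) + (M 0 0 * M 2 2 - M 0 2 * M 2 0)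
        + (M 0 0 * M 1 1 - M 0 1 * M 1 0) := by
    intro M
    rw [Matrix.adjugate_fin_three, Matrix.trace_fin_three]
    simp
  rw [tr3]
  simp only [TH_Jmat_apply]
  norm_num [Fin.ext_iff, Matrix.cons_val_two]; ring

lemma TH_E3_poly (J : Matrix (Fin 3) (Fin 3) ℝ) (d₁ d₂ d₃ : ℝ) :
    ∃ a₀ a₁ a₂ : ℝ, ∀ y, (Jmat J d₁ d₂ d₃ y).det
      = a₀ + a₁*y + a₂*y^2 + (-(d₁*d₂*d₃))*y^3 := by
  refine ⟨J.det,
    -(J 0 0 * J 1 1 * d₃ + J 0 0 * J 2 2 * d₂ + J 1 1 * J 2 2 * d₁)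
      + J 1 2 * J 2 1 * d₁ + J 0 1 * J 1 0 * d₃ + J 0 2 * J 2 0 * d₂,
    J 0 0 * d₂ * d₃ + J 1 1 * d₁ * d₃ + J 2 2 * d₁ * d₂,
    fun y => ?_⟩
  rw [Matrix.det_fin_three, Matrix.det_fin_three]
  simp only [TH_Jmat_apply]
  norm_num [Fin.ext_iff, Matrix.cons_val_two]; ring

lemma TH_stable_signs (M : Matrix (Fin 3) (Fin 3) ℝ) (h : ∀ z ∈ eigs M, z.re < 0) :
    M.trace < 0 ∧ 0 < M.adjugate.trace ∧ M.det < 0 := by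
  rcases TH_eigs_trichotomy M with ⟨x, y, z, h3, ht, ha, hd⟩ | ⟨α, β, r, hβ, h3, ht, ha, hd⟩
  · have hx : x < 0 := by
      have := h (x:ℂ) (by rw [h3]; simp)
      simpa using this
    have hy : y < 0 := by
      have := h (y:ℂ) (by rw [h3]; simp)
      simpa using this
    have hz : z < 0 := by
      have := h (z:ℂ) (by rw [h3]; simp)
      simpa using this
    refine ⟨by rw [ht]; linarith, ?_, ?_⟩
    · rw [ha]
      nlinarith [mul_pos_of_neg_of_neg hx hy, mul_pos_of_neg_of_neg hx hz,
        mul_pos_of_neg_of_neg hy hz]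
    · rw [hd]
      exact mul_neg_of_pos_of_neg (mul_pos_of_neg_of_neg hx hy) hz
  · have hα : α < 0 := by
      have := h ((α:ℂ) + β * Complex.I) (by rw [h3]; simp)
      simpa using this
    have hr : r < 0 := by
      have := h (r:ℂ) (by rw [h3]; simp)
      simpa using this
    have hβ2 : 0 < β^2 := lt_of_le_of_ne (sq_nonneg β) (Ne.symm (pow_ne_zero 2 hβ))
    refine ⟨by rw [ht]; linarith, ?_, ?_⟩
    · rw [ha]
      nlinarith [mul_pos_of_neg_of_neg hα hr, sq_nonneg α]
    · rw [hd]
      exact mul_neg_of_pos_of_neg (by nlinarith [sq_nonneg α]) hr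

end Aux

theorem turingHopf_iff_trace_adjugate_condition
    (J : Matrix (Fin 3) (Fin 3) ℝ) (d₁ d₂ d₃ : ℝ)
    (hd₁ : 0 < d₁) (hd₂ : 0 < d₂) (hd₃ : 0 < d₃)
    (hJ : ∀ z ∈ eigs J, z.re < 0) :
    (∃ y > (0 : ℝ), ∃ z ∈ eigs (Jmat J d₁ d₂ d₃ y), z.im ≠ 0 ∧ 0 < z.re) ↔
      (∃ y'' > (0 : ℝ),
        0 < (Jmat J d₁ d₂ d₃ y'').adjugate.trace ∧
        0 < (Jmat J d₁ d₂ d₃ y'').trace * (Jmat J d₁ d₂ d₃ y'').adjugate.trace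
              - (Jmat J d₁ d₂ d₃ y'').det) := by
  obtain ⟨htJ, haJ, hdJ⟩ := TH_stable_signs J hJ
  have hE1neg : ∀ y : ℝ, 0 ≤ y → (Jmat J d₁ d₂ d₃ y).trace < 0 := by
    intro y hy
    rw [TH_E1_poly]
    nlinarith [mul_nonneg (show (0:ℝ) ≤ d₁+d₂+d₃ by linarith) hy]
  constructor
  · -- hard direction
    rintro ⟨y₀, hy₀, z₀, hz₀mem, hz₀im, hz₀re⟩
    by_contra hcon
    -- structure of eigenvalues at y₀
    rcases TH_eigs_trichotomy (Jmat J d₁ d₂ d₃ y₀) with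
      ⟨x, y, z, h3, _, _, _⟩ | ⟨α, β, r, hβ, h3, ht, ha, hd⟩
    · rw [h3] at hz₀mem
      simp only [Multiset.insert_eq_cons, Multiset.mem_cons, Multiset.mem_singleton] at hz₀mem
      rcases hz₀mem with h | h | h <;> rw [h] at hz₀im <;> simp at hz₀im
    · have hz : z₀ = (α:ℂ) + β*Complex.I ∨ z₀ = (α:ℂ) - β*Complex.I ∨ z₀ = (r:ℂ) := by
        rw [h3] at hz₀mem
        simpa [Multiset.insert_eq_cons, Multiset.mem_cons, Multiset.mem_singleton] using hz₀mem
      have hα : 0 < α := by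
        rcases hz with h | h | h
        · rw [h] at hz₀re; simpa using hz₀re
        · rw [h] at hz₀re; simpa using hz₀re
        · rw [h] at hz₀im; simp at hz₀im
      have hβ2 : 0 < β^2 := lt_of_le_of_ne (sq_nonneg β) (Ne.symm (pow_ne_zero 2 hβ))
      have hr : r < 0 := by
        have h1 := hE1neg y₀ hy₀.le
        rw [ht] at h1
        linarith
      have hdet : (Jmat J d₁ d₂ d₃ y₀).det < 0 := by
        rw [hd]
        exact mul_neg_of_pos_of_neg (by nlinarith [sq_nonneg α]) hr
      have hF : 0 < (Jmat J d₁ d₂ d₃ y₀).trace * (Jmat J d₁ d₂ d₃ y₀).adjugate.trace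
          - (Jmat J d₁ d₂ d₃ y₀).det := by
        rw [ht, ha, hd]
        have key : (2*α+r)*(α^2+β^2+2*α*r) - (α^2+β^2)*r = 2*α*((α+r)^2+β^2) := by ring
        rw [key]
        have : 0 < (α+r)^2 + β^2 := by nlinarith [sq_nonneg (α+r)]
        nlinarith [this]
      by_cases hg : 0 < (Jmat J d₁ d₂ d₃ y₀).adjugate.trace
      · exact hcon ⟨y₀, hy₀, hg, hF⟩
      · push_neg at hg
        -- set up the polynomial functions
        obtain ⟨b₀, b₁, hE2⟩ := TH_E2_poly J d₁ d₂ d₃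
        obtain ⟨a₀, a₁, a₂, hE3⟩ := TH_E3_poly J d₁ d₂ d₃
        set E2f : ℝ → ℝ := fun t => (Jmat J d₁ d₂ d₃ t).adjugate.trace with hE2f
        set E3f : ℝ → ℝ := fun t => (Jmat J d₁ d₂ d₃ t).det with hE3f
        set Ff : ℝ → ℝ := fun t => (Jmat J d₁ d₂ d₃ t).trace * E2f t - E3f t with hFf
        have hcont2 : Continuous E2f := by
          have h : E2f = fun t => b₀ + b₁*t + (d₁*d₂+d₁*d₃+d₂*d₃)*t^2 := funext fun t => hE2 t
          rw [h]
          exact (continuous_const.add (continuous_const.mul continuous_id)).add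
            (continuous_const.mul (continuous_pow 2))
        have hcontF : Continuous Ff := by
          have h : Ff = fun t => (J.trace - (d₁+d₂+d₃)*t)
              * (b₀ + b₁*t + (d₁*d₂+d₁*d₃+d₂*d₃)*t^2)
              - (a₀ + a₁*t + a₂*t^2 + (-(d₁*d₂*d₃))*t^3) := by
            funext t
            show (Jmat J d₁ d₂ d₃ t).trace * (Jmat J d₁ d₂ d₃ t).adjugate.trace
              - (Jmat J d₁ d₂ d₃ t).det = _
            rw [TH_E1_poly, hE2 t, hE3 t]
          rw [h]
          exact (((continuous_const.sub (continuous_const.mul continuous_id)).mul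
            ((continuous_const.add (continuous_const.mul continuous_id)).add
              (continuous_const.mul (continuous_pow 2))))).sub
            (((continuous_const.add (continuous_const.mul continuous_id)).add
              (continuous_const.mul (continuous_pow 2))).add
              (continuous_const.mul (continuous_pow 3)))
        have hcon' : ∀ t : ℝ, 0 < t → 0 < E2f t → Ff t ≤ 0 := by
          intro t ht h2
          by_contra hFt
          push_neg at hFt
          exact hcon ⟨t, ht, h2, hFt⟩
        have hE2zero : 0 < E2f 0 := by
          rw [hE2f]; simpa [TH_Jmat_zero] using haJ
        have hE3zero : E3f 0 < 0 := by
          rw [hE3f]; simpa [TH_Jmat_zero] using hdJ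
        -- left zero g₁ of E2f
        have hS1closed : IsClosed {t : ℝ | 0 ≤ t ∧ E2f t ≤ 0} :=
          (isClosed_le continuous_const continuous_id).inter
            (isClosed_le hcont2 continuous_const)
        have hS1ne : ({t : ℝ | 0 ≤ t ∧ E2f t ≤ 0}).Nonempty := ⟨y₀, hy₀.le, hg⟩
        have hS1bdd : BddBelow {t : ℝ | 0 ≤ t ∧ E2f t ≤ 0} := ⟨0, fun t ht => ht.1⟩
        set g₁ := sInf {t : ℝ | 0 ≤ t ∧ E2f t ≤ 0} with hg₁
        have hg₁mem : g₁ ∈ {t : ℝ | 0 ≤ t ∧ E2f t ≤ 0} :=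
          hS1closed.csInf_mem hS1ne hS1bdd
        have hg₁le : g₁ ≤ y₀ := csInf_le hS1bdd ⟨hy₀.le, hg⟩
        have hg₁pos : 0 < g₁ := by
          rcases lt_or_eq_of_le hg₁mem.1 with h | h
          · exact h
          · exfalso; rw [← h] at hg₁mem; linarith [hg₁mem.2, hE2zero]
        have hleftpos : ∀ t : ℝ, 0 ≤ t → t < g₁ → 0 < E2f t := by
          intro t ht htl
          by_contra h
          push_neg at h
          have : g₁ ≤ t := csInf_le hS1bdd ⟨ht, h⟩
          linarith
        have hE2g₁ : E2f g₁ = 0 := by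
          refine le_antisymm hg₁mem.2 ?_
          by_contra h
          push_neg at h
          have hev : ∀ᶠ t in nhds g₁, E2f t < 0 :=
            (hcont2.continuousAt).eventually_lt_const h
          rw [Metric.eventually_nhds_iff] at hev
          obtain ⟨δ, hδ, hball⟩ := hev
          have ht' : E2f (max 0 (g₁ - δ/2)) < 0 := by
            apply hball
            rw [Real.dist_eq, abs_lt]
            constructor
            · cases' le_or_gt 0 (g₁ - δ/2) with hc hc
              · rw [max_eq_right hc]; linarith
              · rw [max_eq_left hc.le]; linarith
            · cases' le_or_gt 0 (g₁ - δ/2) with hc hc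
              · rw [max_eq_right hc]; linarith
              · rw [max_eq_left hc.le]; linarith
          have : 0 < E2f (max 0 (g₁ - δ/2)) := by
            apply hleftpos _ (le_max_left _ _)
            apply max_lt hg₁pos
            linarith
          linarith
        have hFg₁ : Ff g₁ ≤ 0 := by
          by_contra h
          push_neg at h
          have hev : ∀ᶠ t in nhds g₁, 0 < Ff t :=
            (hcontF.continuousAt).eventually_const_lt h
          rw [Metric.eventually_nhds_iff] at hev
          obtain ⟨δ, hδ, hball⟩ := hev
          set t := max (g₁/2) (g₁ - δ/2) with htdef
          have ht1 : 0 < t := lt_of_lt_of_le (by linarith) (le_max_left _ _)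
          have ht2 : t < g₁ := max_lt (by linarith) (by linarith)
          have ht3 : dist t g₁ < δ := by
            rw [Real.dist_eq, abs_lt]
            constructor
            · have : g₁ - δ/2 ≤ t := le_max_right _ _
              linarith
            · linarith
          have hFt := hball ht3
          have hE2t := hleftpos t ht1.le ht2
          have := hcon' t ht1 hE2t
          linarith
        have hE3g₁ : 0 ≤ E3f g₁ := by
          have : Ff g₁ = (Jmat J d₁ d₂ d₃ g₁).trace * E2f g₁ - E3f g₁ := rfl
          rw [hE2g₁] at this
          simp at this
          linarith [hFg₁, this.symm.le]
        -- right zero g₂ of E2f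
        obtain ⟨B, hB⟩ := TH_quad_pos_tail b₀ b₁ (d₁*d₂+d₁*d₃+d₂*d₃) (by positivity)
        have hS2closed : IsClosed {t : ℝ | y₀ ≤ t ∧ E2f t ≤ 0} :=
          (isClosed_le continuous_const continuous_id).inter
            (isClosed_le hcont2 continuous_const)
        have hS2ne : ({t : ℝ | y₀ ≤ t ∧ E2f t ≤ 0}).Nonempty := ⟨y₀, le_refl _, hg⟩
        have hS2bdd : BddAbove {t : ℝ | y₀ ≤ t ∧ E2f t ≤ 0} := by
          refine ⟨B, fun t ht => ?_⟩
          by_contra h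
          push_neg at h
          have := hB t h.le
          rw [← hE2 t] at this
          exact absurd ht.2 (not_le.mpr this)
        set g₂ := sSup {t : ℝ | y₀ ≤ t ∧ E2f t ≤ 0} with hg₂
        have hg₂mem : g₂ ∈ {t : ℝ | y₀ ≤ t ∧ E2f t ≤ 0} :=
          hS2closed.csSup_mem hS2ne hS2bdd
        have hg₂ge : y₀ ≤ g₂ := hg₂mem.1
        have hrightpos : ∀ t : ℝ, g₂ < t → 0 < E2f t := by
          intro t htg
          by_contra h
          push_neg at h
          have : t ≤ g₂ := le_csSup hS2bdd ⟨by linarith, h⟩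
          linarith
        have hE2g₂ : E2f g₂ = 0 := by
          refine le_antisymm hg₂mem.2 ?_
          by_contra h
          push_neg at h
          have hev : ∀ᶠ t in nhds g₂, E2f t < 0 :=
            (hcont2.continuousAt).eventually_lt_const h
          rw [Metric.eventually_nhds_iff] at hev
          obtain ⟨δ, hδ, hball⟩ := hev
          have ht' : E2f (g₂ + δ/2) < 0 := by
            apply hball
            rw [Real.dist_eq, abs_lt]
            constructor <;> linarith
          have : 0 < E2f (g₂ + δ/2) := hrightpos _ (by linarith)
          linarith
        have hFg₂ : Ff g₂ ≤ 0 := by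
          by_contra h
          push_neg at h
          have hev : ∀ᶠ t in nhds g₂, 0 < Ff t :=
            (hcontF.continuousAt).eventually_const_lt h
          rw [Metric.eventually_nhds_iff] at hev
          obtain ⟨δ, hδ, hball⟩ := hev
          have ht1 : 0 < g₂ + δ/2 := by linarith
          have ht3 : dist (g₂ + δ/2) g₂ < δ := by
            rw [Real.dist_eq, abs_lt]
            constructor <;> linarith
          have hFt := hball ht3
          have hE2t := hrightpos (g₂ + δ/2) (by linarith)
          have := hcon' (g₂ + δ/2) ht1 hE2t
          linarith
        have hE3g₂ : 0 ≤ E3f g₂ := by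
          have : Ff g₂ = (Jmat J d₁ d₂ d₃ g₂).trace * E2f g₂ - E3f g₂ := rfl
          rw [hE2g₂] at this
          simp at this
          linarith [hFg₂, this.symm.le]
        -- E3f y₀ < 0, so g₁ < y₀ < g₂
        have hE3y₀ : E3f y₀ < 0 := hdet
        have hlt1 : g₁ < y₀ := by
          rcases lt_or_eq_of_le hg₁le with h | h
          · exact h
          · exfalso; rw [h] at hE3g₁; linarith
        have hlt2 : y₀ < g₂ := by
          rcases lt_or_eq_of_le hg₂ge with h | h
          · exact h
          · exfalso; rw [← h] at hE3g₂; linarith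
        -- final point T
        obtain ⟨T, hTg, hTneg⟩ := TH_cubic_eventually_neg a₀ a₁ a₂ (-(d₁*d₂*d₃))
          (by nlinarith [mul_pos (mul_pos hd₁ hd₂) hd₃]) g₂
        have hE3T : E3f T < 0 := by
          rw [hE3f]; simp only; rw [hE3 T]; exact hTneg
        exact TH_cubic_no_sign_pattern a₀ a₁ a₂ (-(d₁*d₂*d₃)) 0 g₁ y₀ g₂ T
          hg₁pos hlt1 hlt2 hTg E3f (fun t => hE3 t) hE3zero hE3g₁ hE3y₀ hE3g₂ hE3T
  · -- easy direction
    rintro ⟨y'', hy'', hg, hF⟩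
    refine ⟨y'', hy'', ?_⟩
    rcases TH_eigs_trichotomy (Jmat J d₁ d₂ d₃ y'') with
      ⟨x, y, z, h3, ht, ha, hd⟩ | ⟨α, β, r, hβ, h3, ht, ha, hd⟩
    · exfalso
      have he1 : x + y + z < 0 := by
        have := hE1neg y'' hy''.le
        rw [ht] at this; exact this
      have he2 : 0 < x*y + x*z + y*z := by rw [ha] at hg; exact hg
      have hf : 0 < (x+y+z)*(x*y+x*z+y*z) - x*y*z := by
        rw [ht, ha, hd] at hF; exact hF
      exact TH_all_real_contra x y z he1 he2 hf
    · have hβ2 : 0 < β^2 := lt_of_le_of_ne (sq_nonneg β) (Ne.symm (pow_ne_zero 2 hβ))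
      have hα : 0 < α := by
        rw [ht, ha, hd] at hF
        have key : (2*α+r)*(α^2+β^2+2*α*r) - (α^2+β^2)*r = 2*α*((α+r)^2+β^2) := by ring
        rw [key] at hF
        nlinarith [sq_nonneg (α+r), hF]
      refine ⟨(α:ℂ) + β*Complex.I, by rw [h3]; simp, ?_, ?_⟩
      · simp [hβ]
      · simpa using hα
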